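/- Promoting the dKP nonlinear Lax pair to a contact Lax pair forces z-independence: let u, v : ℝ⁴ → ℝ be continuously differentiable functions of (x, y, z, t), and define f(x,y,z,t,p) = p² + u and g(x,y,z,t,p) = p³ + (3/2)·u·p + v. Then ∂_t f − ∂_y g + {f, g}_L = 0 holds for all (x, y, z, t, p) ∈ ℝ⁵ (bracket in the variables (x, z, p)) if and only if at every (x, y, z, t): u_z = 0, v_z = 0, 4v_x = 3u_y, and 2u_t = 3u·u_x + 2v_y. -/

import Mathlib

/-- Partial derivative of a function on ℝ⁵ in the `i`-th coordinate.
Coordinates: `0 ↦ x`, `1 ↦ y`, `2 ↦ z`, `3 ↦ t`, `4 ↦ p`. -/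
noncomputable def pd5 (i : Fin 5) (h : (Fin 5 → ℝ) → ℝ) (r : Fin 5 → ℝ) : ℝ :=
  fderiv ℝ h r (Pi.single i 1)

/-- Partial derivative of a function on ℝ⁴ in the `i`-th coordinate.
Coordinates: `0 ↦ x`, `1 ↦ y`, `2 ↦ z`, `3 ↦ t`. -/
noncomputable def pd4 (i : Fin 4) (h : (Fin 4 → ℝ) → ℝ) (w : Fin 4 → ℝ) : ℝ :=
  fderiv ℝ h w (Pi.single i 1)

/-- The contact (Lagrange) bracket in the variables `(x, z, p) = (r 0, r 2, r 4)`,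
with `(y, t) = (r 1, r 3)` as parameters. -/
noncomputable def cbr5 (h₁ h₂ : (Fin 5 → ℝ) → ℝ) (r : Fin 5 → ℝ) : ℝ :=
  pd5 4 h₁ r * pd5 0 h₂ r - pd5 4 h₂ r * pd5 0 h₁ r
    - r 4 * (pd5 4 h₁ r * pd5 2 h₂ r - pd5 4 h₂ r * pd5 2 h₁ r)
    + h₁ r * pd5 2 h₂ r - h₂ r * pd5 2 h₁ r

/-- Action of the contact vector field `X_h` in the variables `(x, z, p) = (r 0, r 2, r 4)`,
pointwise in the parameters `(y, t) = (r 1, r 3)`: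
`X_h(φ) = hₚ φₓ + (p h_z − hₓ) φₚ + (h − p hₚ) φ_z`. -/
noncomputable def X5 (h φ : (Fin 5 → ℝ) → ℝ) (r : Fin 5 → ℝ) : ℝ :=
  pd5 4 h r * pd5 0 φ r + (r 4 * pd5 2 h r - pd5 0 h r) * pd5 4 φ r
    + (h r - r 4 * pd5 4 h r) * pd5 2 φ r

/-- Projection `(x,y,z,t,p) ↦ (x,y,z,t)`. -/
def proj45 (r : Fin 5 → ℝ) : Fin 4 → ℝ := fun i => r i.castSucc

namespace DkpAux

noncomputable def Lm : (Fin 5 → ℝ) →L[ℝ] (Fin 4 → ℝ) :=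
  ContinuousLinearMap.pi fun i : Fin 4 => ContinuousLinearMap.proj i.castSucc

noncomputable def P4 : (Fin 5 → ℝ) →L[ℝ] ℝ := ContinuousLinearMap.proj 4

lemma Lm_eq (r : Fin 5 → ℝ) : Lm r = proj45 r := rfl

lemma Lm_single (j : Fin 4) : Lm (Pi.single (j.castSucc) (1:ℝ)) = Pi.single j 1 := by
  funext i
  simp [Lm, Pi.single_apply, Fin.castSucc_inj]

lemma Lm_single0 : Lm (Pi.single (0:Fin 5) (1:ℝ)) = Pi.single (0:Fin 4) 1 := Lm_single 0
lemma Lm_single1 : Lm (Pi.single (1:Fin 5) (1:ℝ)) = Pi.single (1:Fin 4) 1 := Lm_single 1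
lemma Lm_single2 : Lm (Pi.single (2:Fin 5) (1:ℝ)) = Pi.single (2:Fin 4) 1 := Lm_single 2
lemma Lm_single3 : Lm (Pi.single (3:Fin 5) (1:ℝ)) = Pi.single (3:Fin 4) 1 := Lm_single 3

lemma Lm_single4 : Lm (Pi.single (4:Fin 5) (1:ℝ)) = 0 := by
  funext i
  simp only [Lm, ContinuousLinearMap.pi_apply, ContinuousLinearMap.proj_apply, Pi.zero_apply]
  rw [Pi.single_apply, if_neg]
  simp [Fin.ext_iff]; omega


lemma P4_single (i : Fin 5) : P4 (Pi.single i (1:ℝ)) = if i = 4 then 1 else 0 := by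
  simp only [P4, ContinuousLinearMap.proj_apply, Pi.single_apply]
  rcases eq_or_ne i 4 with h | h <;> simp [h, eq_comm]

lemma proj_single0 : proj45 (Pi.single (0:Fin 5) (1:ℝ)) = Pi.single (0:Fin 4) 1 := by
  rw [← Lm_eq, Lm_single0]
lemma proj_single1 : proj45 (Pi.single (1:Fin 5) (1:ℝ)) = Pi.single (1:Fin 4) 1 := by
  rw [← Lm_eq, Lm_single1]
lemma proj_single2 : proj45 (Pi.single (2:Fin 5) (1:ℝ)) = Pi.single (2:Fin 4) 1 := by
  rw [← Lm_eq, Lm_single2]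
lemma proj_single3 : proj45 (Pi.single (3:Fin 5) (1:ℝ)) = Pi.single (3:Fin 4) 1 := by
  rw [← Lm_eq, Lm_single3]
lemma proj_single4 : proj45 (Pi.single (4:Fin 5) (1:ℝ)) = 0 := by
  rw [← Lm_eq, Lm_single4]

lemma P4s0 : P4 (Pi.single (0:Fin 5) (1:ℝ)) = 0 := by rw [P4_single]; simp
lemma P4s1 : P4 (Pi.single (1:Fin 5) (1:ℝ)) = 0 := by rw [P4_single]; simp
lemma P4s2 : P4 (Pi.single (2:Fin 5) (1:ℝ)) = 0 := by rw [P4_single]; simp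
lemma P4s3 : P4 (Pi.single (3:Fin 5) (1:ℝ)) = 0 := by rw [P4_single]; simp
lemma P4s4 : P4 (Pi.single (4:Fin 5) (1:ℝ)) = 1 := by rw [P4_single]; norm_num


lemma fderiv_u (u : (Fin 4 → ℝ) → ℝ) (w : Fin 4 → ℝ) (i : Fin 4) :
    fderiv ℝ u w (Pi.single i 1) = pd4 i u w := rfl

end DkpAux

open DkpAux in
theorem dkp_key (u v : (Fin 4 → ℝ) → ℝ)
    (hu : ContDiff ℝ 1 u) (hv : ContDiff ℝ 1 v) (r : Fin 5 → ℝ) :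
    pd5 3 (fun r => (r 4) ^ 2 + u (proj45 r)) r
      - pd5 1 (fun r => (r 4) ^ 3 + (3 / 2 : ℝ) * u (proj45 r) * r 4 + v (proj45 r)) r
      + cbr5 (fun r => (r 4) ^ 2 + u (proj45 r))
          (fun r => (r 4) ^ 3 + (3 / 2 : ℝ) * u (proj45 r) * r 4 + v (proj45 r)) r
    = (pd4 2 u (proj45 r)) / 2 * (r 4) ^ 3 - pd4 2 v (proj45 r) * (r 4) ^ 2
      + (2 * pd4 0 v (proj45 r) - 3/2 * pd4 1 u (proj45 r)
          + 3/2 * u (proj45 r) * pd4 2 u (proj45 r)) * r 4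
      + (pd4 3 u (proj45 r) - pd4 1 v (proj45 r) - 3/2 * u (proj45 r) * pd4 0 u (proj45 r)
          + u (proj45 r) * pd4 2 v (proj45 r) - v (proj45 r) * pd4 2 u (proj45 r)) := by
  set f : (Fin 5 → ℝ) → ℝ := fun r => (r 4) ^ 2 + u (proj45 r) with hfdef
  set g : (Fin 5 → ℝ) → ℝ := fun r => (r 4) ^ 3 + (3 / 2 : ℝ) * u (proj45 r) * r 4 + v (proj45 r)
    with hgdef
  have h1 : HasFDerivAt (fun r : Fin 5 → ℝ => r 4) P4 r := P4.hasFDerivAt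
  have h2 : HasFDerivAt u (fderiv ℝ u (Lm r)) (Lm r) :=
    (hu.differentiable one_ne_zero (Lm r)).hasFDerivAt
  have h3 : HasFDerivAt (fun r : Fin 5 → ℝ => u (Lm r)) ((fderiv ℝ u (Lm r)).comp Lm) r :=
    h2.comp r Lm.hasFDerivAt
  have h2v : HasFDerivAt v (fderiv ℝ v (Lm r)) (Lm r) :=
    (hv.differentiable one_ne_zero (Lm r)).hasFDerivAt
  have h3v : HasFDerivAt (fun r : Fin 5 → ℝ => v (Lm r)) ((fderiv ℝ v (Lm r)).comp Lm) r :=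
    h2v.comp r Lm.hasFDerivAt
  have hDf : HasFDerivAt f (r 4 • P4 + r 4 • P4 + (fderiv ℝ u (Lm r)).comp Lm) r := by
    have h4 := (h1.mul h1).add h3
    have e : f = fun r : Fin 5 → ℝ => r 4 * r 4 + u (Lm r) := by
      funext r; rw [hfdef]; rw [Lm_eq]; ring
    rw [e]; exact h4
  have hDg : HasFDerivAt g
      ((r 4 • (r 4 • P4 + r 4 • P4) + (r 4 * r 4) • P4
        + ((3/2 * u (Lm r)) • P4 + r 4 • (3/2 : ℝ) • (fderiv ℝ u (Lm r)).comp Lm))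
        + (fderiv ℝ v (Lm r)).comp Lm) r := by
    have hcube := h1.mul (h1.mul h1)
    have hmid := (h3.const_mul (3/2 : ℝ)).mul h1
    have h := (hcube.add hmid).add h3v
    have e : g = fun r : Fin 5 → ℝ =>
        (r 4 * (r 4 * r 4) + (3/2 : ℝ) * u (Lm r) * r 4) + v (Lm r) := by
      funext r; rw [hgdef]; rw [Lm_eq]; ring
    rw [e]; exact h
  have Ef : ∀ i : Fin 5, pd5 i f r
      = (r 4 • P4 + r 4 • P4 + (fderiv ℝ u (Lm r)).comp Lm) (Pi.single i 1) := by
    intro i; rw [pd5, hDf.fderiv]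
  have Eg : ∀ i : Fin 5, pd5 i g r
      = ((r 4 • (r 4 • P4 + r 4 • P4) + (r 4 * r 4) • P4
        + ((3/2 * u (Lm r)) • P4 + r 4 • (3/2 : ℝ) • (fderiv ℝ u (Lm r)).comp Lm))
        + (fderiv ℝ v (Lm r)).comp Lm) (Pi.single i 1) := by
    intro i; rw [pd5, hDg.fderiv]
  rw [cbr5, Ef 0, Ef 2, Ef 3, Ef 4, Eg 0, Eg 1, Eg 2, Eg 4]
  simp only [ContinuousLinearMap.add_apply, ContinuousLinearMap.coe_smul', Pi.smul_apply,
    ContinuousLinearMap.coe_comp', Function.comp_apply, Lm_eq,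
    proj_single0, proj_single1, proj_single2, proj_single3, proj_single4,
    P4s0, P4s1, P4s2, P4s3, P4s4, map_zero,
    fderiv_u, smul_eq_mul]
  norm_num [hfdef, hgdef]
  ring


/-- Promoting the dKP nonlinear Lax pair to a contact Lax pair forces
z-independence: for C¹ `u, v : ℝ⁴ → ℝ` of `(x,y,z,t)` and `f = p² + u`,
`g = p³ + (3/2) u p + v`, the equation `∂_t f − ∂_y g + {f,g}_L = 0` holds for all
`(x,y,z,t,p) ∈ ℝ⁵` iff at every `(x,y,z,t)`: `u_z = 0`, `v_z = 0`, `4 v_x = 3 u_y`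
and `2 u_t = 3 u u_x + 2 v_y`. -/
theorem dkp_contact_promotion_forces_z_independence (u v : (Fin 4 → ℝ) → ℝ)
    (hu : ContDiff ℝ 1 u) (hv : ContDiff ℝ 1 v)
    (f g : (Fin 5 → ℝ) → ℝ)
    (hf : f = fun r => (r 4) ^ 2 + u (proj45 r))
    (hg : g = fun r => (r 4) ^ 3 + (3 / 2 : ℝ) * u (proj45 r) * r 4 + v (proj45 r)) :
    (∀ r : Fin 5 → ℝ, pd5 3 f r - pd5 1 g r + cbr5 f g r = 0) ↔
    (∀ s : Fin 4 → ℝ,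
      pd4 2 u s = 0 ∧ pd4 2 v s = 0 ∧
      4 * pd4 0 v s = 3 * pd4 1 u s ∧
      2 * pd4 3 u s = 3 * u s * pd4 0 u s + 2 * pd4 1 v s) := by
  subst hf hg
  constructor
  · intro h s
    have key := fun p : ℝ => dkp_key u v hu hv (Fin.snoc s p)
    have hproj : ∀ p : ℝ, proj45 (Fin.snoc s p) = s := by
      intro p; funext i; simp [proj45, Fin.snoc_castSucc]
    have hlast : ∀ p : ℝ, (Fin.snoc s p : Fin 5 → ℝ) 4 = p := fun p => Fin.snoc_last _ _
    have E : ∀ p : ℝ,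
        pd4 2 u s / 2 * p ^ 3 - pd4 2 v s * p ^ 2
          + (2 * pd4 0 v s - 3/2 * pd4 1 u s + 3/2 * u s * pd4 2 u s) * p
          + (pd4 3 u s - pd4 1 v s - 3/2 * u s * pd4 0 u s
              + u s * pd4 2 v s - v s * pd4 2 u s) = 0 := by
      intro p
      have := key p
      rw [hproj p, hlast p] at this
      rw [← this]
      exact h (Fin.snoc s p)
    have E0 := E 0
    have E1 := E 1
    have Em := E (-1)
    have E2 := E 2
    norm_num at E0 E1 Em E2
    have hvz : pd4 2 v s = 0 := by linarith
    have huz : pd4 2 u s = 0 := by linarith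
    have h1 : u s * pd4 2 u s = 0 := by rw [huz, mul_zero]
    have h2 : u s * pd4 2 v s = 0 := by rw [hvz, mul_zero]
    have h3 : v s * pd4 2 u s = 0 := by rw [huz, mul_zero]
    refine ⟨huz, hvz, by linarith, by linarith⟩
  · intro h r
    obtain ⟨huz, hvz, h3, h4⟩ := h (proj45 r)
    rw [dkp_key u v hu hv r]
    linear_combination ((r 4) ^ 3 / 2 + 3/2 * u (proj45 r) * r 4 - v (proj45 r)) * huz
      + (u (proj45 r) - (r 4) ^ 2) * hvz + (r 4 / 2) * h3 + (1/2) * h4
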